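/- arXiv:1901.09508 — 2 statements merged into one kernel-verified Lean document; each statement's English description precedes it below -/
import Mathlib

section
/- Let G be a group and call a subset X ⊆ G generic if finitely many left translates of X cover G, and weakly generic if there is a non-generic subset Y ⊆ G with X ∪ Y generic. Then the collection of non-weakly-generic subsets of G is closed under subsets and under finite unions (i.e., forms an ideal in the Boolean algebra of subsets of G). -/
/-- A subset of a group is generic if finitely many left translates of it cover the group. -/
def Generic {G : Type*} [Group G] (A : Set G) : Prop :=
  ∃ F : Finset G, ∀ x : G, ∃ g ∈ F, g⁻¹ * x ∈ A

/-- A subset is weakly generic if its union with some non-generic set is generic. -/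
def WeaklyGeneric {G : Type*} [Group G] (A : Set G) : Prop :=
  ∃ B : Set G, ¬ Generic B ∧ Generic (A ∪ B)

lemma Generic.mono {G : Type*} [Group G] {A B : Set G} (h : A ⊆ B) (hA : Generic A) :
    Generic B := by
  obtain ⟨F, hF⟩ := hA
  exact ⟨F, fun x => by obtain ⟨g, hg, hx⟩ := hF x; exact ⟨g, hg, h hx⟩⟩

theorem non_weakly_generic_is_ideal {G : Type*} [Group G] :
    (∀ A B : Set G, A ⊆ B → ¬ WeaklyGeneric B → ¬ WeaklyGeneric A) ∧
    (∀ A B : Set G, ¬ WeaklyGeneric A → ¬ WeaklyGeneric B → ¬ WeaklyGeneric (A ∪ B)) := by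
  constructor
  · rintro A B hAB hB ⟨C, hC, hAC⟩
    exact hB ⟨C, hC, hAC.mono (Set.union_subset_union_left C hAB)⟩
  · rintro A B hA hB ⟨C, hC, hABC⟩
    by_cases hBC : Generic (B ∪ C)
    · exact hB ⟨C, hC, hBC⟩
    · exact hA ⟨B ∪ C, hBC, hABC.mono (by rw [Set.union_assoc])⟩
end

section
/- In the p-adic field ℚ_p, the set of nonzero n-th powers P_n = {x ∈ ℚ_p* : ∃ y, y^n = x} is an open subgroup of finite index in the multiplicative group ℚ_p*. -/
open Polynomial Topology Filter

section aux

variable {p : ℕ} [Fact p.Prime]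

/-- Hensel's lemma: units close enough to 1 are n-th powers. -/
lemma padic_unit_mem_pow_range {n : ℕ} (hn : 1 ≤ n) (u : ℚ_[p]ˣ)
    (h : ‖(u : ℚ_[p]) - 1‖ < ‖(n : ℚ_[p])‖ ^ 2) :
    u ∈ (powMonoidHom n : ℚ_[p]ˣ →* ℚ_[p]ˣ).range := by
  have hnle : ‖(n : ℚ_[p])‖ ≤ 1 := by
    simpa using Padic.norm_int_le_one (p := p) (n : ℤ)
  have hlt1 : ‖(u : ℚ_[p]) - 1‖ < 1 :=
    h.trans_le (pow_le_one₀ (norm_nonneg _) hnle |>.trans le_rfl)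
  have hu1 : ‖(u : ℚ_[p])‖ = 1 := by
    have hne : ‖(u : ℚ_[p]) - 1‖ ≠ ‖(1 : ℚ_[p])‖ := by rw [norm_one]; exact hlt1.ne
    have := Padic.add_eq_max_of_ne hne
    rw [sub_add_cancel] at this
    rw [this, norm_one, max_eq_right hlt1.le]
  set a : ℤ_[p] := ⟨(u : ℚ_[p]), hu1.le⟩ with ha
  set F : Polynomial ℤ_[p] := X ^ n - C a with hF
  have hF1 : F.eval 1 = 1 - a := by simp [hF]
  have hFd : F.derivative.eval 1 = (n : ℤ_[p]) := by
    simp [hF, Polynomial.derivative_X_pow]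
  have hnorm : ‖F.eval 1‖ < ‖F.derivative.eval 1‖ ^ 2 := by
    rw [hF1, hFd, PadicInt.norm_def, PadicInt.norm_def]
    have h1 : ((1 - a : ℤ_[p]) : ℚ_[p]) = 1 - (u : ℚ_[p]) := by rw [PadicInt.coe_sub, PadicInt.coe_one]
    have h2 : (((n : ℤ_[p])) : ℚ_[p]) = (n : ℚ_[p]) := by push_cast; ring
    rw [h1, h2, norm_sub_rev]
    exact h
  obtain ⟨z, hz, -, -, -⟩ := hensels_lemma hnorm
  have hzn : z ^ n = a := by
    have := hz
    simp only [hF, Polynomial.eval_sub, Polynomial.eval_pow, Polynomial.eval_X,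
      Polynomial.eval_C, Polynomial.coe_aeval_eq_eval] at this
    exact sub_eq_zero.mp this
  have hzc : ((z : ℚ_[p])) ^ n = (u : ℚ_[p]) := by
    have := congrArg (fun t : ℤ_[p] => (t : ℚ_[p])) hzn
    push_cast at this
    exact this
  have hz0 : (z : ℚ_[p]) ≠ 0 := by
    intro h0
    have : (u : ℚ_[p]) = 0 := by
      rw [← hzc, h0, zero_pow (by omega)]
    exact u.ne_zero this
  refine ⟨Units.mk0 _ hz0, Units.ext ?_⟩
  show ((Units.mk0 (z : ℚ_[p]) hz0) ^ n : ℚ_[p]ˣ).val = (u : ℚ_[p])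
  rw [Units.val_pow_eq_pow_val, Units.val_mk0, hzc]

/-- The norm-one units form a compact subset of ℚ_pˣ. -/
lemma isCompact_norm_one_units :
    IsCompact {u : ℚ_[p]ˣ | ‖(u : ℚ_[p])‖ = 1} := by
  rw [(Units.isEmbedding_embedProduct (M := ℚ_[p])).isCompact_iff]
  have himg : (Units.embedProduct ℚ_[p]) '' {u : ℚ_[p]ˣ | ‖(u : ℚ_[p])‖ = 1}
      = {q : ℚ_[p] × ℚ_[p]ᵐᵒᵖ | q.1 * q.2.unop = 1 ∧ ‖q.1‖ = 1} := by
    ext ⟨x, y⟩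
    constructor
    · rintro ⟨u, hu, he⟩
      rw [← he]
      exact ⟨by simp [Units.embedProduct], by simpa [Units.embedProduct] using hu⟩
    · rintro ⟨h1, h2⟩
      refine ⟨⟨x, y.unop, h1, by rw [mul_comm]; exact h1⟩, h2, ?_⟩
      simp only [Units.embedProduct_apply]
      exact Prod.ext rfl (by simp)
  rw [himg]
  have hclosed : IsClosed {q : ℚ_[p] × ℚ_[p]ᵐᵒᵖ | q.1 * q.2.unop = 1 ∧ ‖q.1‖ = 1} :=
    (isClosed_eq (continuous_fst.mul (MulOpposite.continuous_unop.comp continuous_snd))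
      continuous_const).inter
      (isClosed_eq (continuous_norm.comp continuous_fst) continuous_const)
  have Kcomp : IsCompact ((Metric.closedBall (0 : ℚ_[p]) 1) ×ˢ
      (MulOpposite.op '' Metric.closedBall (0 : ℚ_[p]) 1)) :=
    (isCompact_closedBall _ _).prod
      ((isCompact_closedBall _ _).image MulOpposite.continuous_op)
  refine Kcomp.of_isClosed_subset hclosed ?_
  rintro ⟨x, y⟩ ⟨h1, h2⟩
  have hy : ‖y.unop‖ = 1 := by
    have := congrArg norm h1
    rw [norm_mul, h2, one_mul, norm_one] at this
    exact this
  exact ⟨by simpa [mem_closedBall_zero_iff] using h2.le,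
    ⟨y.unop, by simpa [mem_closedBall_zero_iff] using hy.le, rfl⟩⟩

end aux

theorem nthPowers_open_finiteIndex (p : ℕ) [Fact p.Prime] (n : ℕ) (hn : 1 ≤ n) :
    IsOpen (((powMonoidHom n : ℚ_[p]ˣ →* ℚ_[p]ˣ).range : Set ℚ_[p]ˣ)) ∧
    ((powMonoidHom n : ℚ_[p]ˣ →* ℚ_[p]ˣ).range).FiniteIndex := by
  set H := (powMonoidHom n : ℚ_[p]ˣ →* ℚ_[p]ˣ).range with hHdef
  have hp : p.Prime := Fact.out
  have hn0 : (n : ℚ_[p]) ≠ 0 := Nat.cast_ne_zero.mpr (by omega)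
  have hε : (0 : ℝ) < ‖(n : ℚ_[p])‖ ^ 2 := pow_pos (norm_pos_iff.mpr hn0) 2
  -- openness
  have hopen : IsOpen (H : Set ℚ_[p]ˣ) := by
    apply Subgroup.isOpen_of_mem_nhds (g := 1)
    have hball : Units.val ⁻¹' Metric.ball (1 : ℚ_[p]) (‖(n : ℚ_[p])‖ ^ 2) ∈
        𝓝 (1 : ℚ_[p]ˣ) := by
      apply ContinuousAt.preimage_mem_nhds (Units.continuous_val.continuousAt)
      simpa using Metric.ball_mem_nhds (1 : ℚ_[p]) hε
    refine Filter.mem_of_superset hball ?_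
    intro u hu
    apply padic_unit_mem_pow_range hn
    simpa [dist_eq_norm] using hu
  refine ⟨hopen, ?_⟩
  -- finite index
  have : DiscreteTopology (ℚ_[p]ˣ ⧸ H) := QuotientGroup.discreteTopology hopen
  set S : Set ℚ_[p]ˣ := {u : ℚ_[p]ˣ | ‖(u : ℚ_[p])‖ = 1} with hSdef
  have hS : IsCompact S := isCompact_norm_one_units
  have hp0 : ((p : ℚ_[p])) ≠ 0 := Nat.cast_ne_zero.mpr hp.ne_zero
  set pu : ℚ_[p]ˣ := Units.mk0 (p : ℚ_[p]) hp0 with hpu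
  set C : Set ℚ_[p]ˣ := ⋃ r ∈ Finset.range n, (fun s => pu ^ r * s) '' S with hC
  have hCcomp : IsCompact C := by
    apply Set.Finite.isCompact_biUnion (Finset.range n).finite_toSet
    intro r _
    exact hS.image (continuous_mul_left _)
  have hcover : (Set.univ : Set (ℚ_[p]ˣ ⧸ H)) ⊆ QuotientGroup.mk '' C := by
    rintro q -
    induction' q using Quotient.inductionOn with x
    have hx0 : (x : ℚ_[p]) ≠ 0 := x.ne_zero
    set v : ℤ := (x : ℚ_[p]).valuation with hv
    have hxnorm : ‖(x : ℚ_[p])‖ = (p : ℝ) ^ (-v) := Padic.norm_eq_zpow_neg_valuation hx0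
    have hpR : (1 : ℝ) < (p : ℝ) := by exact_mod_cast hp.one_lt
    have hpR0 : (p : ℝ) ≠ 0 := by positivity
    set s : ℚ_[p]ˣ := (pu ^ v)⁻¹ * x with hs
    have hsS : s ∈ S := by
      have hpuv : ‖((pu ^ v : ℚ_[p]ˣ) : ℚ_[p])‖ = (p : ℝ) ^ (-v) := by
        rw [Units.val_zpow_eq_zpow_val, hpu, Units.val_mk0, norm_zpow, Padic.norm_p,
          inv_zpow, ← zpow_neg]
      show ‖((s : ℚ_[p]ˣ) : ℚ_[p])‖ = 1
      rw [hs, Units.val_mul, norm_mul, Units.val_inv_eq_inv_val, norm_inv, hpuv, hxnorm]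
      exact inv_mul_cancel₀ (zpow_ne_zero _ hpR0)
    set r : ℕ := (v % (n : ℤ)).toNat with hr
    have hnZ : (0 : ℤ) < (n : ℤ) := by exact_mod_cast hn
    have hrv : (r : ℤ) = v % (n : ℤ) := Int.toNat_of_nonneg (Int.emod_nonneg v (by omega))
    have hrlt : r ∈ Finset.range n := by
      rw [Finset.mem_range]
      have h1 := Int.emod_lt_of_pos v hnZ
      have h2 := Int.emod_nonneg v (show (n:ℤ) ≠ 0 by omega)
      omega
    have h1 : pu ^ ((n : ℤ) * (v / (n : ℤ))) * pu ^ (r : ℤ) = pu ^ v := by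
      rw [← zpow_add, hrv, Int.mul_ediv_add_emod]
    have hx' : x = pu ^ ((n : ℤ) * (v / (n : ℤ))) * (pu ^ r * s) := by
      rw [← mul_assoc, ← zpow_natCast pu r, h1, hs, mul_inv_cancel_left]
    have hmem : pu ^ ((n : ℤ) * (v / (n : ℤ))) ∈ H := by
      refine ⟨pu ^ (v / (n : ℤ)), ?_⟩
      show (pu ^ (v / (n : ℤ))) ^ n = pu ^ ((n : ℤ) * (v / (n : ℤ)))
      rw [← zpow_natCast, ← zpow_mul, mul_comm]
    refine ⟨pu ^ r * s, Set.mem_biUnion hrlt ⟨s, hsS, rfl⟩, ?_⟩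
    show (QuotientGroup.mk (pu ^ r * s) : ℚ_[p]ˣ ⧸ H) = QuotientGroup.mk x
    rw [QuotientGroup.eq]
    have hxx : (pu ^ r * s)⁻¹ * x = pu ^ ((n : ℤ) * (v / (n : ℤ))) := by
      rw [hx', mul_comm (pu ^ ((n : ℤ) * (v / (n : ℤ)))) (pu ^ r * s), inv_mul_cancel_left]
    rw [hxx]
    exact hmem
  have hcompQ : IsCompact (Set.univ : Set (ℚ_[p]ˣ ⧸ H)) :=
    (hCcomp.image QuotientGroup.isOpenQuotientMap_mk.continuous).of_isClosed_subset
      isClosed_univ hcover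
  have hfin : (Set.univ : Set (ℚ_[p]ˣ ⧸ H)).Finite :=
    hcompQ.finite (isDiscrete_iff_discreteTopology.mpr inferInstance)
  have : Finite (ℚ_[p]ˣ ⧸ H) := Set.finite_univ_iff.mp hfin
  exact Subgroup.finiteIndex_of_finite_quotient (H := H)
end
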